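/- Let G be a finite nonempty linearly ordered set, Π₀ a finite nonempty set, and for each π ∈ Π₀ a probability mass function μ_π : G → ℝ with CDF F_π(g) = ∑_{g' ≤ g} μ_π(g') and strict CDF F⁻_π(g) = ∑_{g' < g} μ_π(g'). Let 0 < τ_1 < … < τ_L ≤ 1, and define recursively q*_i = max_{π ∈ Π_{i-1}} q_{τ_i}(F_π) and Π_i = {π ∈ Π_{i-1} : F⁻_π(q*_i) = min_{π' ∈ Π_{i-1}} F⁻_{π'}(q*_i)}. Define also the two-stage sets Π̂_i = {π ∈ Π_{i-1} : q_{τ_i}(F_π) = q*_i} and Π'_i = {π ∈ Π̂_i : F⁻_π(q*_i) = min_{π' ∈ Π̂_i} F⁻_{π'}(q*_i)}. Then Π'_i = Π_i for every i = 1, …, L; that is, minimizing the strict CDF at q*_i directly over Π_{i-1} produces the same policy class as first restricting to τ_i-quantile maximizers and then minimizing the strict CDF at q*_i. -/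

import Mathlib

open Classical

/-- The τ-lower quantile of `F : G → ℝ` on a finite nonempty linear order `G`:
the least `g` with `τ ≤ F g` (junk value `max G` if no such `g` exists). -/
noncomputable def lowQ {G : Type*} [Fintype G] [LinearOrder G] [Nonempty G]
    (τ : ℝ) (F : G → ℝ) : G :=
  if h : (Finset.univ.filter fun g => τ ≤ F g).Nonempty
  then (Finset.univ.filter fun g => τ ≤ F g).min' h
  else Finset.univ.max' Finset.univ_nonempty

/-- The CDF of a mass function `μ` on a finite linear order: `F(g) = ∑_{g' ≤ g} μ g'`. -/
noncomputable def cdf {G : Type*} [Fintype G] [LinearOrder G] (μ : G → ℝ) (g : G) : ℝ :=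
  ∑ g' ∈ Finset.univ.filter (fun g' => g' ≤ g), μ g'

/-- The strict CDF of a mass function `μ`: `F⁻(g) = ∑_{g' < g} μ g'`. -/
noncomputable def scdf {G : Type*} [Fintype G] [LinearOrder G] (μ : G → ℝ) (g : G) : ℝ :=
  ∑ g' ∈ Finset.univ.filter (fun g' => g' < g), μ g'

section Aux
variable {G : Type*} [Fintype G] [LinearOrder G] [Nonempty G]

lemma filter_nonempty_of_le_one {τ : ℝ} (hτ : τ ≤ 1) (μ : G → ℝ) (hsum : ∑ g, μ g = 1) :
    (Finset.univ.filter fun g => τ ≤ cdf μ g).Nonempty := by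
  refine ⟨Finset.univ.max' Finset.univ_nonempty, ?_⟩
  simp only [Finset.mem_filter, Finset.mem_univ, true_and]
  have : cdf μ (Finset.univ.max' Finset.univ_nonempty) = 1 := by
    rw [cdf, Finset.filter_true_of_mem (fun g _ => Finset.le_max' _ _ (Finset.mem_univ g))]
    exact hsum
  rw [this]; exact hτ

lemma lowQ_mem {τ : ℝ} {F : G → ℝ}
    (h : (Finset.univ.filter fun g => τ ≤ F g).Nonempty) : τ ≤ F (lowQ τ F) := by
  rw [lowQ, dif_pos h]
  have := Finset.min'_mem _ h
  simpa using this

lemma lowQ_min {τ : ℝ} {F : G → ℝ}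
    (h : (Finset.univ.filter fun g => τ ≤ F g).Nonempty) {g : G} (hg : τ ≤ F g) :
    lowQ τ F ≤ g := by
  rw [lowQ, dif_pos h]
  exact Finset.min'_le _ _ (by simp [hg])

lemma scdf_lowQ_lt {τ : ℝ} (hτ : 0 < τ) (μ : G → ℝ)
    (h : (Finset.univ.filter fun g => τ ≤ cdf μ g).Nonempty) :
    scdf μ (lowQ τ (cdf μ)) < τ := by
  set q := lowQ τ (cdf μ) with hq
  by_cases hne : (Finset.univ.filter fun g => g < q).Nonempty
  · set g₀ := Finset.max' _ hne with hg0
    have hg0lt : g₀ < q := by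
      have h2 := Finset.max'_mem _ hne
      rw [Finset.mem_filter] at h2
      exact h2.2
    have hset : (Finset.univ.filter fun g => g < q) = Finset.univ.filter fun g => g ≤ g₀ := by
      ext g
      simp only [Finset.mem_filter, Finset.mem_univ, true_and]
      constructor
      · intro hlt; exact Finset.le_max' _ _ (by simp [hlt])
      · intro hle; exact lt_of_le_of_lt hle hg0lt
    have : scdf μ q = cdf μ g₀ := by rw [scdf, hset]; rfl
    rw [this]
    by_contra hcon
    push_neg at hcon
    exact absurd (lowQ_min h hcon) (not_le.mpr hg0lt)
  · rw [Finset.not_nonempty_iff_eq_empty] at hne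
    rw [scdf, hne, Finset.sum_empty]; exact hτ

lemma scdf_ge_of_lowQ_lt {τ : ℝ} {μ : G → ℝ} (hpos : ∀ g, 0 ≤ μ g)
    (h : (Finset.univ.filter fun g => τ ≤ cdf μ g).Nonempty)
    {q : G} (hlt : lowQ τ (cdf μ) < q) : τ ≤ scdf μ q := by
  have h1 : τ ≤ cdf μ (lowQ τ (cdf μ)) := lowQ_mem h
  refine h1.trans ?_
  rw [cdf, scdf]
  apply Finset.sum_le_sum_of_subset_of_nonneg
  · intro g hg
    simp only [Finset.mem_filter, Finset.mem_univ, true_and] at hg ⊢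
    exact lt_of_le_of_lt hg hlt
  · exact fun g _ _ => hpos g

end Aux

/-- The recursive construction: `qPi μ τ 0 = (junk, Π₀)` and, for `i ≥ 1`,
`qPi μ τ i = (q*_i, Π_i)` where `q*_i = max_{π ∈ Π_{i-1}} q_{τ_i}(F_π)` and
`Π_i` is the set of `π ∈ Π_{i-1}` minimizing the strict CDF `F⁻_π(q*_i)` over `Π_{i-1}`. -/
noncomputable def qPi {G P : Type*} [Fintype G] [LinearOrder G] [Nonempty G] [Fintype P]
    (μ : P → G → ℝ) (τ : ℕ → ℝ) : ℕ → G × Finset P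
  | 0 => (Classical.arbitrary G, Finset.univ)
  | i + 1 =>
    let prev := (qPi μ τ i).2
    let q := WithBot.unbotD (Classical.arbitrary G)
      ((prev.image fun π => lowQ (τ (i + 1)) (cdf (μ π))).max)
    (q, prev.filter fun π => ∀ π' ∈ prev, scdf (μ π) q ≤ scdf (μ π') q)


lemma qPi_snd_nonempty {G P : Type*} [Fintype G] [LinearOrder G] [Nonempty G]
    [Fintype P] [Nonempty P] (μ : P → G → ℝ) (τ : ℕ → ℝ) :
    ∀ i, ((qPi μ τ i).2).Nonempty := by
  intro i
  induction i with
  | zero => exact Finset.univ_nonempty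
  | succ j ih =>
    obtain ⟨π, hπ, hmin⟩ := Finset.exists_min_image _ (fun π => scdf (μ π) ((qPi μ τ (j+1)).1)) ih
    exact ⟨π, Finset.mem_filter.2 ⟨hπ, fun π' hπ' => hmin π' hπ'⟩⟩


/-- first restricting to the `τ_i`-quantile maximizers `Π̂_i` and then
minimizing the strict CDF at `q*_i` yields exactly the same class `Π_i` as minimizing
the strict CDF at `q*_i` directly over `Π_{i-1}`. -/
theorem two_stage_argmin_eq_direct_argmin
    {G P : Type*} [Fintype G] [LinearOrder G] [Nonempty G]
    [Fintype P] [Nonempty P]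
    (μ : P → G → ℝ)
    (hpos : ∀ π g, 0 ≤ μ π g) (hsum : ∀ π, ∑ g, μ π g = 1)
    (L : ℕ) (τ : ℕ → ℝ)
    (hτpos : ∀ i, 1 ≤ i → i ≤ L → 0 < τ i)
    (hτmono : ∀ i j, 1 ≤ i → i < j → j ≤ L → τ i < τ j)
    (hτone : ∀ i, 1 ≤ i → i ≤ L → τ i ≤ 1) :
    ∀ i, 1 ≤ i → i ≤ L →
      (let prev := (qPi μ τ (i - 1)).2
       let q := (qPi μ τ i).1
       let hatPi := prev.filter fun π => lowQ (τ i) (cdf (μ π)) = q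
       hatPi.filter fun π => ∀ π' ∈ hatPi, scdf (μ π) q ≤ scdf (μ π') q)
      = (qPi μ τ i).2 := by
  intro i hi hiL
  obtain ⟨j, rfl⟩ : ∃ j, i = j + 1 := ⟨i - 1, (Nat.succ_pred_eq_of_pos hi).symm⟩
  simp only [Nat.add_sub_cancel]
  set prev := (qPi μ τ j).2 with hprev
  have hne : prev.Nonempty := qPi_snd_nonempty μ τ j
  set τ' := τ (j + 1) with hτ'
  set f : P → G := fun π => lowQ τ' (cdf (μ π)) with hf
  have hSne : (prev.image f).Nonempty := hne.image f
  set q : G := (prev.image f).max' hSne with hqdef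
  have hq1 : (qPi μ τ (j+1)).1 = q := by
    show WithBot.unbotD (Classical.arbitrary G) ((prev.image f).max) = q
    rw [← Finset.coe_max' hSne, WithBot.unbotD_coe]
  have hq2 : (qPi μ τ (j+1)).2
      = prev.filter fun π => ∀ π' ∈ prev, scdf (μ π) q ≤ scdf (μ π') q := by
    show (prev.filter fun π => ∀ π' ∈ prev,
        scdf (μ π) (WithBot.unbotD (Classical.arbitrary G) ((prev.image f).max)) ≤ _) = _
    rw [← Finset.coe_max' hSne, WithBot.unbotD_coe]
  -- basic facts
  have hτpos' : 0 < τ' := hτpos (j+1) hi hiL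
  have hτone' : τ' ≤ 1 := hτone (j+1) hi hiL
  have hfilne : ∀ π : P, (Finset.univ.filter fun g => τ' ≤ cdf (μ π) g).Nonempty :=
    fun π => filter_nonempty_of_le_one hτone' (μ π) (hsum π)
  obtain ⟨π₀, hπ₀, hfπ₀⟩ : ∃ π₀ ∈ prev, f π₀ = q := by
    have := Finset.max'_mem _ hSne
    rw [← hqdef] at this
    obtain ⟨π₀, hπ₀, h⟩ := Finset.mem_image.1 this
    exact ⟨π₀, hπ₀, h⟩
  have hle : ∀ π ∈ prev, f π ≤ q :=
    fun π hπ => Finset.le_max' _ _ (Finset.mem_image_of_mem f hπ)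
  have hlt : ∀ π : P, f π = q → scdf (μ π) q < τ' := by
    intro π h
    rw [← h]
    exact scdf_lowQ_lt hτpos' (μ π) (hfilne π)
  have hge : ∀ π ∈ prev, f π ≠ q → τ' ≤ scdf (μ π) q := by
    intro π hπ h
    exact scdf_ge_of_lowQ_lt (hpos π) (hfilne π) (lt_of_le_of_ne (hle π hπ) h)
  rw [hq1, hq2]
  ext π
  rw [Finset.mem_filter, Finset.mem_filter, Finset.mem_filter]
  constructor
  · rintro ⟨⟨hπ, hfπ⟩, hmin⟩
    refine ⟨hπ, fun π' hπ' => ?_⟩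
    by_cases h' : f π' = q
    · exact hmin π' (Finset.mem_filter.2 ⟨hπ', h'⟩)
    · exact le_of_lt (lt_of_lt_of_le (hlt π hfπ) (hge π' hπ' h'))
  · rintro ⟨hπ, hmin⟩
    have hfπ : f π = q := by
      by_contra h
      have h1 : scdf (μ π) q ≤ scdf (μ π₀) q := hmin π₀ hπ₀
      have h2 : scdf (μ π₀) q < τ' := hlt π₀ hfπ₀
      exact absurd (hge π hπ h) (not_le.mpr (lt_of_le_of_lt h1 h2))
    refine ⟨⟨hπ, hfπ⟩, fun π' hπ' => hmin π' (Finset.mem_filter.1 hπ').1⟩
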